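/- The kernel of the Dirac operator encodes the Betti numbers of all degrees: assuming d₁ ∘ d₂ = 0, finrank(ker D) = β₀ + β₁ + β₂, where β₀ = finrank(V₀ ⧸ range d₁), β₁ = finrank((ker d₁) ⧸ (range d₂)), and β₂ = finrank(ker d₂). -/

import Mathlib

open scoped RealInnerProductSpace

/-- The combinatorial Dirac operator on `V₀ ⊕ V₁ ⊕ V₂` as a linear map:
`D(x, y, z) = (d₁ y, d₁† x + d₂ z, d₂† y)`. -/
noncomputable def diracMap {V₀ V₁ V₂ : Type*}
    [NormedAddCommGroup V₀] [InnerProductSpace ℝ V₀] [FiniteDimensional ℝ V₀]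
    [NormedAddCommGroup V₁] [InnerProductSpace ℝ V₁] [FiniteDimensional ℝ V₁]
    [NormedAddCommGroup V₂] [InnerProductSpace ℝ V₂] [FiniteDimensional ℝ V₂]
    (d₁ : V₁ →ₗ[ℝ] V₀) (d₂ : V₂ →ₗ[ℝ] V₁) :
    (V₀ × V₁ × V₂) →ₗ[ℝ] V₀ × V₁ × V₂ :=
  LinearMap.prod
    (d₁ ∘ₗ (LinearMap.fst ℝ V₁ V₂ ∘ₗ LinearMap.snd ℝ V₀ (V₁ × V₂)))
    (LinearMap.prod
      (LinearMap.adjoint d₁ ∘ₗ LinearMap.fst ℝ V₀ (V₁ × V₂)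
        + d₂ ∘ₗ (LinearMap.snd ℝ V₁ V₂ ∘ₗ LinearMap.snd ℝ V₀ (V₁ × V₂)))
      (LinearMap.adjoint d₂ ∘ₗ (LinearMap.fst ℝ V₁ V₂ ∘ₗ LinearMap.snd ℝ V₀ (V₁ × V₂))))


open Module LinearMap

-- finrank of a product of submodules
lemma finrank_submodule_prod {R M N : Type*} [Field R]
    [AddCommGroup M] [Module R M] [AddCommGroup N] [Module R N]
    [FiniteDimensional R M] [FiniteDimensional R N]
    (p : Submodule R M) (q : Submodule R N) :
    finrank R (p.prod q) = finrank R p + finrank R q := by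
  have h : range (p.subtype.prodMap q.subtype) = p.prod q := by
    ext ⟨a,b⟩
    simp only [LinearMap.mem_range, Submodule.mem_prod, Prod.ext_iff, Prod.exists,
      LinearMap.prodMap_apply, Submodule.coe_subtype]
    constructor
    · rintro ⟨u, v, h1, h2⟩; exact ⟨h1 ▸ u.2, h2 ▸ v.2⟩
    · rintro ⟨ha, hb⟩; exact ⟨⟨a,ha⟩, ⟨b,hb⟩, rfl, rfl⟩
  have hinj : Function.Injective (p.subtype.prodMap q.subtype) := by
    rw [← ker_eq_bot, ker_prodMap, Submodule.ker_subtype, Submodule.ker_subtype,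
      Submodule.prod_bot]
  rw [← h, LinearMap.finrank_range_of_inj hinj, finrank_prod]

-- ker of adjoint = orthogonal of range
lemma ker_adjoint_eq {V W : Type*}
    [NormedAddCommGroup V] [InnerProductSpace ℝ V] [FiniteDimensional ℝ V]
    [NormedAddCommGroup W] [InnerProductSpace ℝ W] [FiniteDimensional ℝ W]
    (d : V →ₗ[ℝ] W) : ker (adjoint d) = (range d)ᗮ := by
  ext x
  simp only [mem_ker, Submodule.mem_orthogonal]
  constructor
  · rintro h u ⟨y, rfl⟩
    rw [real_inner_comm, ← adjoint_inner_left, h, inner_zero_left]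
  · intro h
    apply ext_inner_right ℝ
    intro y
    rw [adjoint_inner_left, real_inner_comm, inner_zero_left]
    exact h _ ⟨y, rfl⟩

lemma ker_dirac {V₀ V₁ V₂ : Type*}
    [NormedAddCommGroup V₀] [InnerProductSpace ℝ V₀] [FiniteDimensional ℝ V₀]
    [NormedAddCommGroup V₁] [InnerProductSpace ℝ V₁] [FiniteDimensional ℝ V₁]
    [NormedAddCommGroup V₂] [InnerProductSpace ℝ V₂] [FiniteDimensional ℝ V₂]
    (d₁ : V₁ →ₗ[ℝ] V₀) (d₂ : V₂ →ₗ[ℝ] V₁) (hc : d₁ ∘ₗ d₂ = 0) :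
    ker (diracMap d₁ d₂)
      = (ker (adjoint d₁)).prod (((ker d₁ ⊓ ker (adjoint d₂)) : Submodule ℝ V₁).prod (ker d₂)) := by
  ext ⟨x, y, z⟩
  simp only [diracMap, mem_ker, LinearMap.prod_apply, Function.prod, LinearMap.comp_apply,
    LinearMap.add_apply, LinearMap.fst_apply, LinearMap.snd_apply, Prod.mk_eq_zero,
    Submodule.mem_prod, Submodule.mem_inf, mem_ker]
  constructor
  · rintro ⟨h1, h2, h3⟩
    have hd : d₁ (d₂ z) = 0 := by
      have := congrFun (congrArg DFunLike.coe hc) z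
      simpa using this
    have hAx : adjoint d₁ x = 0 := by
      have hsum : d₁ (adjoint d₁ x + d₂ z) = 0 := by rw [h2]; simp
      have h4 : d₁ (adjoint d₁ x) = 0 := by
        rw [map_add, hd, add_zero] at hsum; exact hsum
      have h5 : ⟪adjoint d₁ x, adjoint d₁ x⟫ = (0:ℝ) := by
        rw [adjoint_inner_left, h4, inner_zero_right]
      exact inner_self_eq_zero.mp h5
    refine ⟨hAx, ⟨h1, h3⟩, ?_⟩
    rw [hAx, zero_add] at h2
    exact h2
  · rintro ⟨hAx, ⟨h1, h3⟩, hz⟩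
    exact ⟨h1, by rw [hAx, hz, add_zero], h3⟩

/-- The kernel of the Dirac operator encodes the Betti numbers of all degrees:
if `d₁ ∘ d₂ = 0` then `dim ker D = β₀ + β₁ + β₂`. -/
theorem dirac_ker_finrank {V₀ V₁ V₂ : Type*}
    [NormedAddCommGroup V₀] [InnerProductSpace ℝ V₀] [FiniteDimensional ℝ V₀]
    [NormedAddCommGroup V₁] [InnerProductSpace ℝ V₁] [FiniteDimensional ℝ V₁]
    [NormedAddCommGroup V₂] [InnerProductSpace ℝ V₂] [FiniteDimensional ℝ V₂]
    (d₁ : V₁ →ₗ[ℝ] V₀) (d₂ : V₂ →ₗ[ℝ] V₁) (hc : d₁ ∘ₗ d₂ = 0) :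
    Module.finrank ℝ ↥(LinearMap.ker (diracMap d₁ d₂))
      = Module.finrank ℝ (V₀ ⧸ LinearMap.range d₁)
        + Module.finrank ℝ
            (↥(LinearMap.ker d₁) ⧸
              Submodule.comap (LinearMap.ker d₁).subtype (LinearMap.range d₂))
        + Module.finrank ℝ ↥(LinearMap.ker d₂) := by
  rw [ker_dirac d₁ d₂ hc, finrank_submodule_prod, finrank_submodule_prod]
  have hle : range d₂ ≤ ker d₁ := LinearMap.range_le_ker_iff.mpr hc
  have h0 : finrank ℝ (ker (adjoint d₁)) = finrank ℝ (V₀ ⧸ range d₁) := by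
    have e1 := Submodule.finrank_add_finrank_orthogonal (𝕜 := ℝ) (range d₁)
    have e2 := Submodule.finrank_quotient_add_finrank (range d₁)
    rw [ker_adjoint_eq]
    omega
  have h1 : finrank ℝ ((ker d₁ ⊓ ker (adjoint d₂) : Submodule ℝ V₁))
      = finrank ℝ (↥(ker d₁) ⧸ Submodule.comap (ker d₁).subtype (range d₂)) := by
    have e1 := Submodule.finrank_add_inf_finrank_orthogonal (𝕜 := ℝ) hle
    have e2 := Submodule.finrank_quotient_add_finrank
      (Submodule.comap (ker d₁).subtype (range d₂))
    have e3 : finrank ℝ (Submodule.comap (ker d₁).subtype (range d₂))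
        = finrank ℝ (range d₂) :=
      (Submodule.comapSubtypeEquivOfLe hle).finrank_eq
    rw [ker_adjoint_eq, inf_comm]
    omega
  omega
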